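/- Let λ > 0 and ε > 0. For every u ∈ ℝ, the piecewise value T(u), defined by T(u) = ε·u/(ε + λ) if |u| ≤ ε + λ and T(u) = u·(1 − λ/|u|) if |u| > ε + λ, is the unique minimizer over a ∈ ℝ of the function f(a) = (1/2)(u − a)² + λ·H_ε(a). -/

import Mathlib

lemma huber_subgrad (ε : ℝ) (hε : 0 < ε) (t a g : ℝ)
    (hg : (|t| ≤ ε ∧ g = t/ε) ∨ (ε < |t| ∧ |g| = 1 ∧ g * t = |t|)) :
    (if |t| ≤ ε then t^2/(2*ε) else |t| - ε/2) + g * (a - t) ≤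
    (if |a| ≤ ε then a^2/(2*ε) else |a| - ε/2) := by
  rcases hg with ⟨ht, rfl⟩ | ⟨ht, hg1, hgt⟩
  · rw [if_pos ht]
    have ht2 : t^2 = |t|^2 := (sq_abs t).symm
    have ht3 : t * a ≤ |t| * |a| := by
      calc t * a ≤ |t * a| := le_abs_self _
        _ = |t| * |a| := abs_mul t a
    split_ifs with ha
    · have hd : a^2/(2*ε) - (t^2/(2*ε) + t/ε*(a-t)) = (a-t)^2/(2*ε) := by
        field_simp; ring
      have : (0:ℝ) ≤ (a-t)^2/(2*ε) := by positivity
      linarith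
    · push_neg at ha
      have h2 : 0 ≤ (ε - |t|) * (|a| - (ε + |t|)/2) := by
        apply mul_nonneg <;> nlinarith
      have hd : (|a| - ε/2) - (t^2/(2*ε) + t/ε*(a-t)) =
          ((ε - |t|) * (|a| - (ε+|t|)/2) + (|t| * |a| - t * a))/ε := by
        field_simp; linear_combination ht2
      have : (0:ℝ) ≤ ((ε - |t|) * (|a| - (ε+|t|)/2) + (|t| * |a| - t * a))/ε := by
        apply div_nonneg _ hε.le; linarith
      linarith
  · rw [if_neg (not_le.2 ht)]
    have hga : g * a ≤ |a| := by
      calc g * a ≤ |g * a| := le_abs_self _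
        _ = |a| := by rw [abs_mul, hg1, one_mul]
    have hsplit : g * (a - t) = g * a - |t| := by rw [mul_sub, hgt]
    split_ifs with ha
    · have h1 : |a| - ε/2 ≤ a^2/(2*ε) := by
        rw [le_div_iff₀ (by linarith : (0:ℝ) < 2*ε)]
        nlinarith [sq_abs a, sq_nonneg (|a| - ε)]
      linarith
    · linarith

theorem huber_activation_unique_minimizer (lam ε : ℝ)
    (hlam : 0 < lam) (hε : 0 < ε) (u : ℝ)
    (T : ℝ)
    (hT : T = if |u| ≤ ε + lam then ε * u / (ε + lam) else u * (1 - lam / |u|)) :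
    ∀ a : ℝ, a ≠ T →
      (1/2) * (u - T)^2 + lam * (if |T| ≤ ε then T^2 / (2*ε) else |T| - ε/2) <
      (1/2) * (u - a)^2 + lam * (if |a| ≤ ε then a^2 / (2*ε) else |a| - ε/2) := by
  intro a ha
  have hsum : 0 < ε + lam := by linarith
  obtain ⟨g, hgu, hgsub⟩ :
      ∃ g : ℝ, u - T = lam * g ∧
        ((|T| ≤ ε ∧ g = T/ε) ∨ (ε < |T| ∧ |g| = 1 ∧ g * T = |T|)) := by
    by_cases h : |u| ≤ ε + lam
    · rw [if_pos h] at hT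
      refine ⟨T/ε, ?_, Or.inl ⟨?_, rfl⟩⟩
      · rw [hT]; field_simp; ring
      · rw [hT, abs_div, abs_mul, abs_of_pos hε, abs_of_pos hsum]
        rw [div_le_iff₀ hsum]
        nlinarith [abs_nonneg u]
    · push_neg at h
      rw [if_neg (not_le.2 h)] at hT
      have hu0 : u ≠ 0 := by intro h0; rw [h0, abs_zero] at h; linarith
      have hau : 0 < |u| := abs_pos.2 hu0
      have h1 : (0:ℝ) ≤ 1 - lam/|u| := by
        rw [sub_nonneg, div_le_one hau]; linarith
      have hTabs : |T| = |u| - lam := by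
        rw [hT, abs_mul, abs_of_nonneg h1]; field_simp
      have hu2 : u * u = |u| * |u| := (abs_mul_abs_self u).symm
      refine ⟨u/|u|, ?_, Or.inr ⟨?_, ?_, ?_⟩⟩
      · rw [hT]; field_simp; ring
      · rw [hTabs]; linarith
      · rw [abs_div, abs_abs, div_self (ne_of_gt hau)]
      · rw [hTabs, hT]; field_simp; nlinarith [hu2]
  have key := huber_subgrad ε hε T a g hgsub
  have hsq : 0 < (a - T)^2 := by
    have : a - T ≠ 0 := sub_ne_zero.2 ha
    positivity
  have h3 : (u-T)*(a-T) = lam*(g*(a-T)) := by rw [hgu]; ring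
  have hexp : (1/2) * (u - a)^2 =
      (1/2)*(u-T)^2 - (u-T)*(a-T) + (1/2)*(a-T)^2 := by ring
  have hkey' : lam * ((if |T| ≤ ε then T^2/(2*ε) else |T| - ε/2) + g * (a - T)) ≤
      lam * (if |a| ≤ ε then a^2/(2*ε) else |a| - ε/2) :=
    mul_le_mul_of_nonneg_left key hlam.le
  nlinarith [hkey', hsq, h3, hexp]
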